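/- Suppose x, y, z are positive integers with x² + y² a perfect square, x² + (z−y)² a perfect square, (z−x)² + y² a perfect square, and (z−x)² + (z−y)² a perfect square, with gcd(x,y,z)=1. Then z is even and exactly one of x, y is even. -/

import Mathlib

lemma key_odd_sq (k l r : ℤ) : (2*k+1)^2 + (2*l+1)^2 ≠ r^2 := by
  intro h
  have h4 : (2*(k : ZMod 4)+1)^2 + (2*(l : ZMod 4)+1)^2 = (r : ZMod 4)^2 := by
    have := congrArg (fun n : ℤ => (n : ZMod 4)) h
    push_cast at this
    exact this
  revert h4
  generalize (k : ZMod 4) = a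
  generalize (l : ZMod 4) = b
  generalize (r : ZMod 4) = c
  revert a b c
  decide

lemma no_two_odd (a b : ℤ) (ha : Odd a) (hb : Odd b)
    (h : ∃ r : ℤ, a^2 + b^2 = r^2) : False := by
  obtain ⟨k, rfl⟩ := ha
  obtain ⟨l, rfl⟩ := hb
  obtain ⟨r, hr⟩ := h
  exact key_odd_sq k l r hr

theorem stmt_8 (x y z : ℤ) (hx : 0 < x) (hy : 0 < y) (hz : 0 < z)
    (h1 : ∃ r : ℤ, x ^ 2 + y ^ 2 = r ^ 2)
    (h2 : ∃ r : ℤ, x ^ 2 + (z - y) ^ 2 = r ^ 2)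
    (h3 : ∃ r : ℤ, (z - x) ^ 2 + y ^ 2 = r ^ 2)
    (h4 : ∃ r : ℤ, (z - x) ^ 2 + (z - y) ^ 2 = r ^ 2)
    (hgcd : Int.gcd x (Int.gcd y z) = 1) :
    Even z ∧ ((Even x ∧ Odd y) ∨ (Odd x ∧ Even y)) := by
  have c1 : ¬ (x % 2 = 1 ∧ y % 2 = 1) := by
    rintro ⟨ha, hb⟩
    exact no_two_odd x y (Int.odd_iff.mpr ha) (Int.odd_iff.mpr hb) h1
  have c2 : ¬ (x % 2 = 1 ∧ (z - y) % 2 = 1) := by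
    rintro ⟨ha, hb⟩
    exact no_two_odd x (z - y) (Int.odd_iff.mpr ha) (Int.odd_iff.mpr hb) h2
  have c3 : ¬ ((z - x) % 2 = 1 ∧ y % 2 = 1) := by
    rintro ⟨ha, hb⟩
    exact no_two_odd (z - x) y (Int.odd_iff.mpr ha) (Int.odd_iff.mpr hb) h3
  have c4 : ¬ ((z - x) % 2 = 1 ∧ (z - y) % 2 = 1) := by
    rintro ⟨ha, hb⟩
    exact no_two_odd (z - x) (z - y) (Int.odd_iff.mpr ha) (Int.odd_iff.mpr hb) h4
  have cg : ¬ (x % 2 = 0 ∧ y % 2 = 0 ∧ z % 2 = 0) := by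
    rintro ⟨ha, hb, hc⟩
    have h2x : (2 : ℤ) ∣ x := Int.dvd_of_emod_eq_zero ha
    have h2y : (2 : ℤ) ∣ y := Int.dvd_of_emod_eq_zero hb
    have h2z : (2 : ℤ) ∣ z := Int.dvd_of_emod_eq_zero hc
    have : (2 : ℤ) ∣ (Int.gcd x (Int.gcd y z) : ℤ) :=
      Int.dvd_coe_gcd h2x (Int.dvd_coe_gcd h2y h2z)
    rw [hgcd] at this
    norm_num at this
  rw [Int.even_iff, Int.even_iff, Int.even_iff, Int.odd_iff, Int.odd_iff]
  omega
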